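/- arXiv:2303.06176 — 2 statements merged into one kernel-verified Lean document; each statement's English description precedes it below -/
import Mathlib

section
/- The arcsine measure with density 1/(π√(x(1−x))) on [0,1] is invariant under the logistic map f_4(x) = 4x(1−x): the pushforward of this measure under f_4 equals itself. -/
open MeasureTheory Set Real

noncomputable def hh (x : ℝ) : ℝ := 2 / π * arcsin (Real.sqrt x)
noncomputable def gg (θ : ℝ) : ℝ := Real.sin (π * θ / 2) ^ 2
noncomputable def tT (θ : ℝ) : ℝ := 1 - |2 * θ - 1|
noncomputable def dd (x : ℝ) : ENNReal := ENNReal.ofReal (1 / (π * Real.sqrt (x * (1 - x))))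
noncomputable def lam : Measure ℝ := volume.restrict (Ioo (0:ℝ) 1)
noncomputable def rho : Measure ℝ := lam.withDensity dd

lemma gg_cont : Continuous gg := by unfold gg; continuity
lemma tT_cont : Continuous tT := by unfold tT; continuity
lemma hh_cont : Continuous hh := by
  unfold hh
  exact continuous_const.mul (Real.continuous_arcsin.comp Real.continuous_sqrt)
lemma ff_cont : Continuous (fun x : ℝ => 4 * x * (1 - x)) := by continuity

lemma gg_hh (x : ℝ) (hx : x ∈ Ioo (0:ℝ) 1) : gg (hh x) = x := by
  obtain ⟨h0, h1⟩ := hx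
  have hs0 : (0:ℝ) ≤ Real.sqrt x := Real.sqrt_nonneg x
  have hs1 : Real.sqrt x ≤ 1 := by
    rw [show (1:ℝ) = Real.sqrt 1 by simp]; exact Real.sqrt_le_sqrt h1.le
  have hπ : π * (2 / π * arcsin (Real.sqrt x)) / 2 = arcsin (Real.sqrt x) := by
    field_simp
  rw [gg, hh, hπ, Real.sin_arcsin (by linarith) hs1, Real.sq_sqrt h0.le]

lemma hh_image : hh '' Ioo 0 1 = Ioo 0 1 := by
  ext y
  constructor
  · rintro ⟨x, ⟨h0, h1⟩, rfl⟩
    have hs0 : (0:ℝ) < Real.sqrt x := Real.sqrt_pos.2 h0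
    have hs1 : Real.sqrt x < 1 := by
      rw [show (1:ℝ) = Real.sqrt 1 by simp]
      exact Real.sqrt_lt_sqrt h0.le h1
    have ha0 : 0 < arcsin (Real.sqrt x) := Real.arcsin_pos.2 hs0
    have ha1 : arcsin (Real.sqrt x) < π / 2 := Real.arcsin_lt_pi_div_two.2 hs1
    constructor
    · exact mul_pos (by positivity) ha0
    · rw [hh, show (1:ℝ) = 2 / π * (π / 2) by field_simp]
      exact mul_lt_mul_of_pos_left ha1 (by positivity)
  · intro hy
    obtain ⟨h0, h1⟩ := hy
    have hπ := Real.pi_pos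
    have hs : 0 < Real.sin (π * y / 2) := by
      apply Real.sin_pos_of_pos_of_lt_pi <;> nlinarith
    have hc : 0 < Real.cos (π * y / 2) := by
      apply Real.cos_pos_of_mem_Ioo
      constructor <;> [nlinarith; nlinarith]
    have hsc := Real.sin_sq_add_cos_sq (π * y / 2)
    refine ⟨gg y, ⟨?_, ?_⟩, ?_⟩
    · rw [gg]; positivity
    · rw [gg]; nlinarith
    · have hsnn : 0 ≤ Real.sin (π * y / 2) := hs.le
      rw [hh, gg, Real.sqrt_sq hsnn,
        Real.arcsin_sin (by nlinarith) (by nlinarith)]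
      field_simp

lemma hh_deriv (x : ℝ) (hx : x ∈ Ioo (0:ℝ) 1) :
    HasDerivAt hh (1 / (π * Real.sqrt (x * (1 - x)))) x := by
  obtain ⟨h0, h1⟩ := hx
  have hs0 : (0:ℝ) < Real.sqrt x := Real.sqrt_pos.2 h0
  have hs1 : Real.sqrt x < 1 := by
    rw [show (1:ℝ) = Real.sqrt 1 by simp]
    exact Real.sqrt_lt_sqrt h0.le h1
  have hsq : HasDerivAt Real.sqrt (1 / (2 * Real.sqrt x)) x := Real.hasDerivAt_sqrt (ne_of_gt h0)
  have har : HasDerivAt arcsin (1 / Real.sqrt (1 - Real.sqrt x ^ 2)) (Real.sqrt x) :=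
    Real.hasDerivAt_arcsin (by linarith) (ne_of_lt hs1)
  have hcomp := (har.comp x hsq).const_mul (2 / π)
  refine hcomp.congr_deriv ?_
  rw [Real.sq_sqrt h0.le, Real.sqrt_mul h0.le]
  have h1s : (0:ℝ) < Real.sqrt (1 - x) := Real.sqrt_pos.2 (by linarith)
  have hπ := Real.pi_pos
  field_simp

lemma hh_inj : InjOn hh (Ioo 0 1) := by
  intro a ha b hb hab
  rw [← gg_hh a ha, ← gg_hh b hb, hab]

lemma key_cov : Measure.map hh rho = lam := by
  have hcov := MeasureTheory.map_withDensity_abs_det_fderiv_eq_addHaar (μ := volume)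
    (s := Ioo (0:ℝ) 1) (f := hh)
    (f' := fun x => (1 : ℝ →L[ℝ] ℝ).smulRight (1 / (π * Real.sqrt (x * (1 - x)))))
    measurableSet_Ioo.nullMeasurableSet
    (fun x hx => ((hh_deriv x hx).hasDerivWithinAt).hasFDerivWithinAt)
    hh_inj
  rw [hh_image] at hcov
  rw [lam, ← hcov]
  congr 1
  rw [rho, lam]
  congr 1
  funext x
  rw [ContinuousLinearMap.smulRight_one_eq_toSpanSingleton,
    ContinuousLinearMap.det_toSpanSingleton, dd, abs_of_nonneg (by positivity)]

lemma rho_eq_map : rho = Measure.map gg lam := by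
  have h1 : Measure.map gg (Measure.map hh rho) = Measure.map gg lam := by rw [key_cov]
  rw [Measure.map_map gg_cont.measurable hh_cont.measurable] at h1
  have hac : rho ≪ volume.restrict (Ioo 0 1) := by
    rw [rho, lam]; exact withDensity_absolutelyContinuous _ _
  have hae : ∀ᵐ x ∂rho, x ∈ Ioo (0:ℝ) 1 := hac (ae_restrict_mem measurableSet_Ioo)
  have h2 : Measure.map (gg ∘ hh) rho = Measure.map id rho := by
    apply Measure.map_congr
    filter_upwards [hae] with x hx
    exact gg_hh x hx
  rw [h2, Measure.map_id] at h1
  exact h1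

lemma conj : (fun x : ℝ => 4 * x * (1 - x)) ∘ gg = gg ∘ tT := by
  funext θ
  simp only [Function.comp, gg, tT]
  have hsc := Real.sin_sq_add_cos_sq (π * θ / 2)
  have h2 := Real.sin_two_mul (π * θ / 2)
  rw [show 2 * (π * θ / 2) = π * θ by ring] at h2
  have lhs : 4 * Real.sin (π * θ / 2) ^ 2 * (1 - Real.sin (π * θ / 2) ^ 2)
      = Real.sin (π * θ) ^ 2 := by
    rw [h2]; nlinarith [hsc]
  rw [lhs, show π * (1 - |2 * θ - 1|) / 2 = π / 2 - π * |2 * θ - 1| / 2 by ring,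
    Real.sin_pi_div_two_sub]
  have habs : Real.cos (π * |2 * θ - 1| / 2) = Real.cos (π * (2 * θ - 1) / 2) := by
    rcases abs_cases (2 * θ - 1) with ⟨h, _⟩ | ⟨h, _⟩
    · rw [h]
    · rw [h, show π * -(2 * θ - 1) / 2 = -(π * (2 * θ - 1) / 2) by ring, Real.cos_neg]
  rw [habs, show π * (2 * θ - 1) / 2 = π * θ - π / 2 by ring, Real.cos_sub_pi_div_two]

lemma tent_invariant : Measure.map tT lam = lam := by
  have hfin : IsFiniteMeasure (Measure.map tT lam) := by
    constructor
    rw [Measure.map_apply tT_cont.measurable MeasurableSet.univ, lam]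
    exact lt_of_le_of_lt (measure_mono (subset_univ _)) (by simp)
  refine @Measure.ext_of_Iic ℝ _ _ _ _ _ _ (Measure.map tT lam) lam hfin (fun a => ?_)
  rw [Measure.map_apply tT_cont.measurable measurableSet_Iic, lam,
    Measure.restrict_apply (tT_cont.measurable measurableSet_Iic),
    Measure.restrict_apply measurableSet_Iic]
  have hpre : tT ⁻¹' Iic a ∩ Ioo 0 1 = (Ioc 0 (a/2) ∪ Ico (1 - a/2) 1) ∩ Ioo 0 1 := by
    ext θ
    simp only [mem_inter_iff, mem_preimage, mem_Iic, mem_Ioo, tT, mem_union, mem_Ioc, mem_Ico]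
    constructor
    · rintro ⟨hle, h0, h1⟩
      refine ⟨?_, h0, h1⟩
      rcases abs_cases (2 * θ - 1) with ⟨he, _⟩ | ⟨he, _⟩
      · rw [he] at hle; right; exact ⟨by linarith, h1⟩
      · rw [he] at hle; left; exact ⟨h0, by linarith⟩
    · rintro ⟨hcase, h0, h1⟩
      refine ⟨?_, h0, h1⟩
      rcases hcase with ⟨_, hu⟩ | ⟨hl, _⟩ <;>
        rcases abs_cases (2 * θ - 1) with ⟨he, _⟩ | ⟨he, _⟩ <;> rw [he] <;> linarith
  rw [hpre]
  rcases le_or_gt a 0 with ha | ha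
  · have h1 : Iic a ∩ Ioo (0:ℝ) 1 = (∅ : Set ℝ) := by
      ext x; simp only [mem_inter_iff, mem_Iic, mem_Ioo, mem_empty_iff_false, iff_false]
      rintro ⟨hx, hx0, _⟩; linarith
    have h2 : (Ioc 0 (a/2) ∪ Ico (1 - a/2) 1) ∩ Ioo (0:ℝ) 1 = (∅ : Set ℝ) := by
      ext x
      simp only [mem_inter_iff, mem_union, mem_Ioc, mem_Ico, mem_Ioo, mem_empty_iff_false,
        iff_false]
      rintro ⟨hc, hx0, hx1⟩
      rcases hc with ⟨h, h'⟩ | ⟨h, h'⟩ <;> linarith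
    rw [h1, h2]
  rcases le_or_gt 1 a with ha1 | ha1
  · have h1 : Iic a ∩ Ioo (0:ℝ) 1 = Ioo 0 1 :=
      inter_eq_self_of_subset_right (fun x hx => le_trans hx.2.le ha1)
    have h2 : (Ioc 0 (a/2) ∪ Ico (1 - a/2) 1) ∩ Ioo (0:ℝ) 1 = Ioo 0 1 := by
      apply inter_eq_self_of_subset_right
      intro x hx
      rcases le_or_gt x (a/2) with h | h
      · left; exact ⟨hx.1, h⟩
      · right; exact ⟨by linarith, hx.2⟩
    rw [h1, h2]
  · have h1 : Iic a ∩ Ioo (0:ℝ) 1 = Ioc 0 a := by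
      ext x; simp only [mem_inter_iff, mem_Iic, mem_Ioo, mem_Ioc]
      constructor
      · rintro ⟨h, h0, _⟩; exact ⟨h0, h⟩
      · rintro ⟨h0, hxa⟩; exact ⟨hxa, h0, lt_of_le_of_lt hxa ha1⟩
    have h2 : (Ioc 0 (a/2) ∪ Ico (1 - a/2) 1) ∩ Ioo (0:ℝ) 1
        = Ioc 0 (a/2) ∪ Ico (1 - a/2) 1 := by
      apply inter_eq_self_of_subset_left
      rintro x (⟨h, h'⟩ | ⟨h, h'⟩) <;> constructor <;> linarith
    rw [h1, h2]
    have hdisj : Disjoint (Ioc (0:ℝ) (a/2)) (Ico (1 - a/2) 1) := by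
      apply Set.disjoint_left.2
      rintro x ⟨_, h⟩ ⟨h', _⟩; linarith
    rw [measure_union hdisj measurableSet_Ico, Real.volume_Ioc, Real.volume_Ico,
      Real.volume_Ioc, ← ENNReal.ofReal_add (by linarith) (by linarith)]
    norm_num

theorem arcsine_invariant_logistic_four :
    Measure.map (fun x : ℝ => 4 * x * (1 - x))
      ((volume.restrict (Set.Icc (0:ℝ) 1)).withDensity
        (fun x => ENNReal.ofReal (1 / (Real.pi * Real.sqrt (x * (1 - x)))))) =
    (volume.restrict (Set.Icc (0:ℝ) 1)).withDensity
      (fun x => ENNReal.ofReal (1 / (Real.pi * Real.sqrt (x * (1 - x))))) := by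
  have hIcc : volume.restrict (Set.Icc (0:ℝ) 1) = volume.restrict (Ioo (0:ℝ) 1) :=
    (Measure.restrict_congr_set MeasureTheory.Ioo_ae_eq_Icc).symm
  have hrho : (volume.restrict (Set.Icc (0:ℝ) 1)).withDensity
      (fun x => ENNReal.ofReal (1 / (Real.pi * Real.sqrt (x * (1 - x))))) = rho := by
    rw [hIcc, rho, lam]
    congr 1
  rw [hrho, rho_eq_map,
    Measure.map_map ff_cont.measurable gg_cont.measurable, conj,
    ← Measure.map_map gg_cont.measurable tT_cont.measurable, tent_invariant]
end

section
/- If X = U·E·V† is a singular value decomposition with U, V unitary and E diagonal, then the non-Hermitian matrix logistic map X' = a·X·(I − V·U†·X) satisfies X' = U·(a·E·(I − E))·V†; in particular the unitary factors U and V are preserved and the singular values evolve by the scalar logistic map. -/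
open Matrix

theorem nonhermitian_logistic_preserves_svd {n : Type*} [Fintype n] [DecidableEq n]
    (a : ℝ) (X U V E : Matrix n n ℂ)
    (hU : U ∈ Matrix.unitaryGroup n ℂ) (hV : V ∈ Matrix.unitaryGroup n ℂ)
    (hE : E.IsDiag) (hEntries : ∀ i, (E i i).im = 0 ∧ 0 ≤ (E i i).re)
    (hdec : X = U * E * Vᴴ) :
    a • (X * (1 - (V * Uᴴ) * X)) = U * (a • (E * (1 - E))) * Vᴴ := by
  have hV' : Vᴴ * V = 1 := hV.1
  have hU' : Uᴴ * U = 1 := hU.1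
  subst hdec
  rw [Matrix.mul_smul, Matrix.smul_mul]
  congr 1
  rw [mul_sub, mul_one, mul_sub, mul_one]
  have : U * E * Vᴴ * (V * Uᴴ * (U * E * Vᴴ)) = U * (E * E) * Vᴴ := by
    calc U * E * Vᴴ * (V * Uᴴ * (U * E * Vᴴ))
        = U * E * ((Vᴴ * V) * ((Uᴴ * U) * (E * Vᴴ))) := by noncomm_ring
      _ = U * (E * E) * Vᴴ := by rw [hV', hU']; noncomm_ring
  rw [this]
  noncomm_ring
end
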